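/- Let G be an oriented graph on n vertices with underlying minimum degree δ(G) ≥ n/2 + 1, let C = v_1...v_{n-1}v_1 be a cycle in G with σ^-(C) ≤ ℓ − 2, and let w be the unique vertex outside C. Then G contains a Hamilton cycle C* with σ^-(C*) ≤ ℓ, obtained by inserting w between two consecutive cycle vertices that are both neighbours of w. -/

import Mathlib

open Function

/-- An oriented graph: an asymmetric (hence irreflexive) relation, i.e. no 2-cycles. -/
def Oriented {V : Type*} (E : V → V → Prop) : Prop := ∀ u v, E u v → ¬ E v u

/-- Adjacency in the underlying undirected graph. -/
def UAdj {V : Type*} (E : V → V → Prop) (u v : V) : Prop := E u v ∨ E v u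

/-- Degree of a vertex in the underlying undirected graph. -/
noncomputable def udeg {V : Type*} (E : V → V → Prop) (x : V) : ℕ := Nat.card {y : V // UAdj E x y}

/-- Cyclic successor of an index. -/
def cnext {m : ℕ} (i : Fin m) : Fin m := ⟨(i.val + 1) % m, Nat.mod_lt _ i.pos⟩

/-- A Hamilton cycle of an oriented graph on `Fin n`, given as a cyclic listing of
all vertices (consecutive vertices, when distinct, are joined by an edge). -/
def IsHamCycle {n : ℕ} (E : Fin n → Fin n → Prop) (c : Fin n → Fin n) : Prop :=
  Bijective c ∧ ∀ i : Fin n, c i ≠ c (cnext i) → UAdj E (c i) (c (cnext i))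

/-- Number of forward edges of a Hamilton cycle. -/
noncomputable def sigmaPlusHC {n : ℕ} (E : Fin n → Fin n → Prop) (c : Fin n → Fin n) : ℕ :=
  Nat.card {i : Fin n // E (c i) (c (cnext i))}

/-- Number of backward edges of a Hamilton cycle. -/
noncomputable def sigmaMinusHC {n : ℕ} (E : Fin n → Fin n → Prop) (c : Fin n → Fin n) : ℕ :=
  Nat.card {i : Fin n // E (c (cnext i)) (c i)}

noncomputable def sigmaMaxHC {n : ℕ} (E : Fin n → Fin n → Prop) (c : Fin n → Fin n) : ℕ :=
  max (sigmaPlusHC E c) (sigmaMinusHC E c)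

noncomputable def sigmaMinHC {n : ℕ} (E : Fin n → Fin n → Prop) (c : Fin n → Fin n) : ℕ :=
  min (sigmaPlusHC E c) (sigmaMinusHC E c)

/-- A (not necessarily spanning) cycle on `m` vertices in an oriented graph on `Fin n`. -/
def IsCycleOn {n m : ℕ} (E : Fin n → Fin n → Prop) (c : Fin m → Fin n) : Prop :=
  3 ≤ m ∧ Injective c ∧ ∀ i : Fin m, UAdj E (c i) (c (cnext i))

noncomputable def sigmaPlusCyc {n m : ℕ} (E : Fin n → Fin n → Prop) (c : Fin m → Fin n) : ℕ :=
  Nat.card {i : Fin m // E (c i) (c (cnext i))}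

noncomputable def sigmaMinusCyc {n m : ℕ} (E : Fin n → Fin n → Prop) (c : Fin m → Fin n) : ℕ :=
  Nat.card {i : Fin m // E (c (cnext i)) (c i)}

noncomputable def sigmaMaxCyc {n m : ℕ} (E : Fin n → Fin n → Prop) (c : Fin m → Fin n) : ℕ :=
  max (sigmaPlusCyc E c) (sigmaMinusCyc E c)

noncomputable def sigmaMinCyc {n m : ℕ} (E : Fin n → Fin n → Prop) (c : Fin m → Fin n) : ℕ :=
  min (sigmaPlusCyc E c) (sigmaMinusCyc E c)

/-- A path on `m + 1` vertices (`m` edges) in an oriented graph on `Fin n`. -/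
def IsPathOn {n m : ℕ} (E : Fin n → Fin n → Prop) (p : Fin (m + 1) → Fin n) : Prop :=
  Injective p ∧ ∀ i : Fin m, UAdj E (p i.castSucc) (p i.succ)

noncomputable def sigmaPlusPath {n m : ℕ} (E : Fin n → Fin n → Prop) (p : Fin (m + 1) → Fin n) : ℕ :=
  Nat.card {i : Fin m // E (p i.castSucc) (p i.succ)}

noncomputable def sigmaMinusPath {n m : ℕ} (E : Fin n → Fin n → Prop) (p : Fin (m + 1) → Fin n) : ℕ :=
  Nat.card {i : Fin m // E (p i.succ) (p i.castSucc)}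

noncomputable def sigmaMaxPath {n m : ℕ} (E : Fin n → Fin n → Prop) (p : Fin (m + 1) → Fin n) : ℕ :=
  max (sigmaPlusPath E p) (sigmaMinusPath E p)

noncomputable def sigmaMinPath {n m : ℕ} (E : Fin n → Fin n → Prop) (p : Fin (m + 1) → Fin n) : ℕ :=
  min (sigmaPlusPath E p) (sigmaMinusPath E p)

/-- If `δ(G) ≥ n/2 + 1`, `C` is a cycle on `n - 1` vertices with `σ⁻(C) ≤ ℓ - 2`
and `w` is the remaining vertex, then `G` has a Hamilton cycle `C*` with
`σ⁻(C*) ≤ ℓ` (insert `w` between two consecutive neighbours). -/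

lemma cnext_eq_add_one {m : ℕ} [NeZero m] (h2 : 2 ≤ m) (i : Fin m) : cnext i = i + 1 := by
  ext
  show (i.val + 1) % m = ((i.val + (1 : Fin m).val)) % m
  rw [Fin.val_one']
  rw [Nat.mod_eq_of_lt (by omega : 1 < m)]

theorem insert_vertex_into_cycle (n ℓ δ : ℕ)
    (E : Fin n → Fin n → Prop) (hE : Oriented E)
    (hδlb : ∀ x : Fin n, δ ≤ udeg E x) (hδ : n + 2 ≤ 2 * δ)
    (c : Fin (n - 1) → Fin n) (hc : IsCycleOn E c)
    (w : Fin n) (hw : ∀ i, c i ≠ w)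
    (hcover : ∀ x : Fin n, x = w ∨ ∃ i, c i = x)
    (hσC : sigmaMinusCyc E c + 2 ≤ ℓ) :
    ∃ C : Fin n → Fin n, IsHamCycle E C ∧ sigmaMinusHC E C ≤ ℓ := by
  classical
  obtain ⟨m, rfl⟩ : ∃ m, n = m + 1 := ⟨n - 1, (Nat.succ_pred_eq_of_pos w.pos).symm⟩
  have hm3 : 3 ≤ m := hc.1
  haveI : NeZero m := ⟨by omega⟩
  set c' : Fin m → Fin (m + 1) := c with hc'def
  have hcinj : Injective c' := hc.2.1
  have hcadj : ∀ a : Fin m, UAdj E (c' a) (c' (cnext a)) := hc.2.2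
  have hw' : ∀ a : Fin m, c' a ≠ w := hw
  have hcover' : ∀ x : Fin (m + 1), x = w ∨ ∃ a : Fin m, c' a = x := hcover
  have hσC' : sigmaMinusCyc E c' + 2 ≤ ℓ := hσC
  -- the set of cycle positions adjacent to w
  set S : Finset (Fin m) := Finset.univ.filter (fun a => UAdj E w (c' a)) with hSdef
  have hwS : δ ≤ S.card := by
    have h1 : δ ≤ udeg E w := hδlb w
    rw [udeg, Nat.card_eq_fintype_card, Fintype.card_subtype] at h1
    have hsub : Finset.univ.filter (fun y => UAdj E w y) ⊆ S.image c' := by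
      intro y hy
      simp only [Finset.mem_filter, Finset.mem_univ, true_and] at hy
      have hyw : y ≠ w := by
        rintro rfl; exact hy.elim (fun h => hE _ _ h h) (fun h => hE _ _ h h)
      rcases hcover' y with h | ⟨a, ha⟩
      · exact absurd h hyw
      · refine Finset.mem_image.mpr ⟨a, ?_, ha⟩
        simp only [hSdef, Finset.mem_filter, Finset.mem_univ, true_and, ha]
        exact hy
    calc δ ≤ _ := h1
      _ ≤ (S.image c').card := Finset.card_le_card hsub
      _ ≤ S.card := Finset.card_image_le
  have hpair : ∃ a : Fin m, UAdj E w (c' a) ∧ UAdj E w (c' (cnext a)) := by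
    by_contra hno
    push_neg at hno
    have hdisj : Disjoint S (S.image (fun a => cnext a)) := by
      rw [Finset.disjoint_right]
      intro a ha haS
      obtain ⟨b, hbS, rfl⟩ := Finset.mem_image.mp ha
      simp only [hSdef, Finset.mem_filter, Finset.mem_univ, true_and] at hbS haS
      exact hno b hbS haS
    have hinj : Function.Injective (fun a : Fin m => cnext a) := by
      intro a b hab
      simp only [cnext_eq_add_one (by omega : 2 ≤ m)] at hab
      exact add_left_injective 1 hab
    have hcard : (S ∪ S.image (fun a => cnext a)).card ≤ m := by
      simpa using Finset.card_le_univ (S ∪ S.image (fun a => cnext a))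
    rw [Finset.card_union_of_disjoint hdisj, Finset.card_image_of_injective _ hinj] at hcard
    omega
  obtain ⟨i, hwi, hwni⟩ := hpair
  set k : Fin m := i + 1 with hk
  set C : Fin (m + 1) → Fin (m + 1) :=
    fun j => if h : j.val < m then c' (⟨j.val, h⟩ + k) else w with hCdef
  have hCw : ∀ (j : Fin (m + 1)), ¬ j.val < m → C j = w := fun j h => dif_neg h
  have hCc : ∀ (j : Fin (m + 1)) (h : j.val < m), C j = c' (⟨j.val, h⟩ + k) :=
    fun j h => dif_pos h
  have hCinj : Injective C := by
    intro a b hab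
    by_cases ha : a.val < m <;> by_cases hb : b.val < m
    · rw [hCc a ha, hCc b hb] at hab
      have h2 := add_right_cancel (hcinj hab)
      have hv := congrArg Fin.val h2
      exact Fin.ext hv
    · rw [hCc a ha, hCw b hb] at hab
      exact absurd hab (hw' _)
    · rw [hCw a ha, hCc b hb] at hab
      exact absurd hab.symm (hw' _)
    · have := a.isLt; have := b.isLt
      exact Fin.ext (by omega)
  -- value of C at the cyclic successor, interior case
  have hnext : ∀ (j : Fin (m + 1)) (h : j.val + 1 < m),
      C (cnext j) = c' (cnext (⟨j.val, by omega⟩ + k)) := by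
    intro j h
    have hv : (cnext j).val = j.val + 1 := Nat.mod_eq_of_lt (by omega)
    rw [hCc (cnext j) (by omega)]
    congr 1
    rw [cnext_eq_add_one (by omega : 2 ≤ m)]
    have h1 : (⟨(cnext j).val, by omega⟩ : Fin m) = ⟨j.val, by omega⟩ + 1 := by
      ext
      show (cnext j).val = (j.val + (1 : Fin m).val) % m
      rw [Fin.val_one', hv, Nat.mod_eq_of_lt (by omega : 1 < m),
        Nat.mod_eq_of_lt (by omega : j.val + 1 < m)]
    rw [h1]
    abel
  have hCadj : ∀ j : Fin (m + 1), UAdj E (C j) (C (cnext j)) := by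
    intro j
    rcases lt_trichotomy (j.val + 1) m with h | h | h
    · rw [hCc j (by omega), hnext j h]
      exact hcadj _
    · -- j.val + 1 = m : edge from c i to w
      have hj : j.val < m := by omega
      rw [hCc j hj]
      have h0 : (⟨j.val, hj⟩ : Fin m) + 1 = 0 := by
        ext
        show (j.val + (1 : Fin m).val) % m = ((0 : Fin m) : ℕ)
        rw [Fin.val_one', Fin.val_zero, Nat.mod_eq_of_lt (by omega : 1 < m), h,
          Nat.mod_self]
      have hik : (⟨j.val, hj⟩ : Fin m) + k = i := by
        rw [hk]
        calc (⟨j.val, hj⟩ : Fin m) + (i + 1) = (⟨j.val, hj⟩ + 1) + i := by abel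
          _ = 0 + i := by rw [h0]
          _ = i := zero_add i
      rw [hik]
      have hcn : (cnext j).val = m := by
        show (j.val + 1) % (m + 1) = m
        rw [h]; exact Nat.mod_eq_of_lt (by omega)
      rw [hCw (cnext j) (by omega)]
      exact hwi.symm
    · -- j.val = m : edge from w to c (cnext i)
      have hj : j.val = m := by have := j.isLt; omega
      rw [hCw j (by omega)]
      have hcn : (cnext j).val = 0 := by
        show (j.val + 1) % (m + 1) = 0
        rw [hj, Nat.mod_self]
      rw [hCc (cnext j) (by omega)]
      have h1 : (⟨(cnext j).val, by omega⟩ : Fin m) + k = cnext i := by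
        rw [cnext_eq_add_one (by omega : 2 ≤ m), hk]
        have h2 : (⟨(cnext j).val, by omega⟩ : Fin m) = 0 := by
          ext
          show (cnext j).val = ((0 : Fin m) : ℕ)
          rw [Fin.val_zero, hcn]
        rw [h2, zero_add]
      rw [h1]
      exact hwni
  refine ⟨C, ⟨Finite.injective_iff_bijective.mp hCinj, fun j _ => hCadj j⟩, ?_⟩
  -- counting backward edges
  set B : Finset (Fin m) := Finset.univ.filter (fun a => E (c' (cnext a)) (c' a)) with hBdef
  have hBcard : sigmaMinusCyc E c' = B.card := by
    rw [sigmaMinusCyc, Nat.card_eq_fintype_card, Fintype.card_subtype]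
  set T : Finset (Fin (m + 1)) := Finset.univ.filter (fun j => E (C (cnext j)) (C j)) with hTdef
  have hTcard : sigmaMinusHC E C = T.card := by
    rw [sigmaMinusHC, Nat.card_eq_fintype_card, Fintype.card_subtype]
  rw [hTcard]
  have hTsplit : T ⊆ T.filter (fun j => j.val + 1 < m) ∪ {⟨m - 1, by omega⟩, ⟨m, by omega⟩} := by
    intro j hj
    by_cases h : j.val + 1 < m
    · exact Finset.mem_union_left _ (Finset.mem_filter.mpr ⟨hj, h⟩)
    · refine Finset.mem_union_right _ ?_
      have := j.isLt
      simp only [Finset.mem_insert, Finset.mem_singleton]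
      rcases Nat.lt_or_ge j.val m with h' | h'
      · left; exact Fin.ext (show j.val = m - 1 by omega)
      · right; exact Fin.ext (show j.val = m by omega)
  have h2 : (T.filter (fun j => j.val + 1 < m)).card ≤ B.card := by
    apply Finset.card_le_card_of_injOn
      (fun j => (⟨j.val % m, Nat.mod_lt _ (by omega)⟩ : Fin m) + k)
    · intro j hj
      simp only [hTdef, Finset.mem_coe, Finset.mem_filter, Finset.mem_univ, true_and] at hj
      obtain ⟨hPj, hjm⟩ := hj
      have hmod : (⟨j.val % m, Nat.mod_lt _ (by omega)⟩ : Fin m) = ⟨j.val, by omega⟩ :=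
        Fin.ext (Nat.mod_eq_of_lt (by omega))
      rw [hCc j (by omega), hnext j hjm] at hPj
      simp only [hBdef, Finset.mem_coe, Finset.mem_filter, Finset.mem_univ, true_and, hmod]
      exact hPj
    · intro j1 hj1 j2 hj2 heq
      simp only [hTdef, Finset.coe_filter, Set.mem_setOf_eq] at hj1 hj2
      have h2' := add_right_cancel heq
      have hv : j1.val % m = j2.val % m := congrArg Fin.val h2'
      rw [Nat.mod_eq_of_lt (by omega : j1.val < m),
        Nat.mod_eq_of_lt (by omega : j2.val < m)] at hv
      exact Fin.ext hv
  have h3 : T.card ≤ (T.filter (fun j => j.val + 1 < m)).card + 2 := by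
    calc T.card ≤ _ := Finset.card_le_card hTsplit
      _ ≤ (T.filter (fun j => j.val + 1 < m)).card
          + ({⟨m - 1, by omega⟩, ⟨m, by omega⟩} : Finset (Fin (m + 1))).card :=
        Finset.card_union_le _ _
      _ ≤ (T.filter (fun j => j.val + 1 < m)).card + 2 := by
        have h4 : ({⟨m - 1, by omega⟩, ⟨m, by omega⟩} : Finset (Fin (m + 1))).card ≤ 2 :=
          (Finset.card_insert_le _ _).trans (by simp)
        omega
  rw [hBcard] at hσC'
  omega
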